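/- For every natural number N ≥ 1 and a, b, t such that all denominators are nonzero: F_N(a,b;t) = ((1 - t q^N)(aq;q)_N/(bq;q)_N) ∑_{n=0}^{N} [N choose n] (b/a;q)_n (aq;q)_{N-n} (aq)^n / ((aq;q)_N (1 - t q^n)), where F_N(a,b;t) := ∑_{n=0}^{N} [N choose n] (aq;q)_n (t;q)_{N-n} (q;q)_n t^n / ((bq;q)_n (t;q)_N). (Partial fraction decomposition of the finite Fine function.) -/

import Mathlib

open Finset

/-- q-Pochhammer symbol (a;q)_n = ∏_{k=0}^{n-1} (1 - a q^k). -/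
noncomputable def qP (a q : ℂ) (n : ℕ) : ℂ := ∏ k ∈ Finset.range n, (1 - a * q ^ k)

/-- Gaussian (q-)binomial coefficient [N choose n]_q. -/
noncomputable def qBinom (q : ℂ) (N n : ℕ) : ℂ := qP q q N / (qP q q n * qP q q (N - n))

/-- Finite analogue of Fine's function. -/
noncomputable def fineN (q : ℂ) (N : ℕ) (a b t : ℂ) : ℂ :=
  ∑ n ∈ Finset.range (N + 1),
    qBinom q N n * (qP (a * q) q n * qP t q (N - n) * qP q q n * t ^ n /
      (qP (b * q) q n * qP t q N))

lemma qP_zero (a q : ℂ) : qP a q 0 = 1 := by simp [qP]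

lemma qP_succ (a q : ℂ) (n : ℕ) : qP a q (n+1) = qP a q n * (1 - a * q ^ n) := by
  simp [qP, Finset.prod_range_succ]

lemma qP_add (a q : ℂ) (m n : ℕ) :
    qP a q (m + n) = qP a q m * ∏ k ∈ Finset.range n, (1 - a * q ^ (m + k)) := by
  simp [qP, Finset.prod_range_add, pow_add]

lemma qP_ne_zero (a q : ℂ) (n : ℕ) (h : ∀ k < n, (1:ℂ) - a * q ^ k ≠ 0) : qP a q n ≠ 0 :=
  Finset.prod_ne_zero_iff.2 (fun k hk => h k (Finset.mem_range.mp hk))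

lemma qP_ne_zero_of_le {a q : ℂ} {k N : ℕ} (hk : k ≤ N) (h : qP a q N ≠ 0) : qP a q k ≠ 0 := by
  obtain ⟨l, rfl⟩ := Nat.exists_eq_add_of_le hk
  rw [qP_add] at h
  exact left_ne_zero_of_mul h

lemma qPq_ne_zero {q : ℂ} {N : ℕ} (hq : ∀ n, 1 ≤ n → n ≤ N → (1:ℂ) - q ^ n ≠ 0)
    {k : ℕ} (hk : k ≤ N) : qP q q k ≠ 0 := by
  refine qP_ne_zero _ _ _ (fun j hj => ?_)
  rw [← pow_succ']
  exact hq (j+1) (Nat.succ_le_succ (Nat.zero_le _)) (by omega)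

lemma qPb_ne_zero {b q : ℂ} {N : ℕ} (hb : ∀ n, 1 ≤ n → n ≤ N → (1:ℂ) - b * q ^ n ≠ 0)
    {k : ℕ} (hk : k ≤ N) : qP (b*q) q k ≠ 0 := by
  refine qP_ne_zero _ _ _ (fun j hj => ?_)
  have : b * q * q ^ j = b * q ^ (j+1) := by ring
  rw [this]
  exact hb (j+1) (Nat.succ_le_succ (Nat.zero_le _)) (by omega)

lemma qBinom_zero_right (q : ℂ) (N : ℕ) (h : qP q q N ≠ 0) : qBinom q N 0 = 1 := by
  simp [qBinom, qP_zero, div_self h]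

lemma qBinom_self (q : ℂ) (N : ℕ) (h : qP q q N ≠ 0) : qBinom q N N = 1 := by
  simp [qBinom, qP_zero, div_self h]

lemma qBinom_pascal (q : ℂ) (m i : ℕ) (h1 : 1 ≤ i) (h2 : i ≤ m)
    (hq : ∀ n, 1 ≤ n → n ≤ m+1 → (1:ℂ) - q ^ n ≠ 0) :
    qBinom q (m+1) i = qBinom q m i + q ^ (m+1-i) * qBinom q m (i-1) := by
  obtain ⟨j, rfl⟩ : ∃ j, i = j + 1 := ⟨i - 1, by omega⟩
  have hj : j + 1 ≤ m := h2
  have hA : qP q q m ≠ 0 := qPq_ne_zero hq (by omega)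
  have hB : qP q q j ≠ 0 := qPq_ne_zero hq (by omega)
  have hC : qP q q (m - j - 1) ≠ 0 := qPq_ne_zero hq (by omega)
  have hβ : (1:ℂ) - q * q ^ j ≠ 0 := by
    have := hq (j+1) (by omega) (by omega); rwa [pow_succ'] at this
  have hγ : (1:ℂ) - q * q ^ (m - j - 1) ≠ 0 := by
    have := hq (m - j) (by omega) (by omega)
    rw [show m - j = (m - j - 1) + 1 by omega, pow_succ'] at this; exact this
  have e1 : qP q q (m+1) = qP q q m * (1 - q * q ^ m) := qP_succ q q m
  have e2 : qP q q (j+1) = qP q q j * (1 - q * q ^ j) := qP_succ q q j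
  have e3 : qP q q (m - j) = qP q q (m - j - 1) * (1 - q * q ^ (m - j - 1)) := by
    rw [show m - j = (m - j - 1) + 1 by omega]; exact qP_succ q q _
  have e4 : m + 1 - (j+1) = m - j := by omega
  have e5 : m - (j + 1) = m - j - 1 := by omega
  have e6 : (j + 1) - 1 = j := by omega
  have key : (1:ℂ) - q * q ^ m = (1 - q * q ^ (m-j-1)) + q ^ (m - j) * (1 - q * q ^ j) := by
    have : q ^ (m - j) * (q * q ^ j) = q * q ^ m := by
      rw [show q * q ^ j = q ^ (j+1) by rw [pow_succ'], ← pow_add,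
        show m - j + (j+1) = m + 1 by omega, pow_succ']
    have h7 : q * q ^ (m - j - 1) = q ^ (m - j) := by
      rw [← pow_succ', show m - j - 1 + 1 = m - j by omega]
    rw [mul_sub, this, ← h7]; ring
  rw [qBinom, qBinom, qBinom, e4, e5, e6, e1, e2, e3, key]
  field_simp

lemma choose_two_succ (i : ℕ) : (i+1).choose 2 = i.choose 2 + i := by
  simp [Nat.choose_succ_succ, Nat.choose_one_right, Nat.add_comm]

lemma keyK (a b q : ℂ) : ∀ m N : ℕ, m ≤ N →
    (∀ n, 1 ≤ n → n ≤ N → (1:ℂ) - q ^ n ≠ 0) →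
    (∀ n, 1 ≤ n → n ≤ N → (1:ℂ) - b * q ^ n ≠ 0) →
    ∑ i ∈ Finset.range (m+1),
        qBinom q m i * (-1)^i * q^(i.choose 2) * (qP (a*q) q (N-i) / qP (b*q) q (N-i))
      = qP (a*q) q (N-m) * (∏ i ∈ Finset.range m, (b*q^N - a*q^(N-i))) / qP (b*q) q N := by
  intro m
  induction m with
  | zero =>
    intro N _ hq hb
    simp [qBinom, qP_zero]
  | succ m ih =>
    intro N hmN hq hb
    obtain ⟨M, rfl⟩ : ∃ M, N = M + 1 := ⟨N - 1, by omega⟩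
    have hmM : m ≤ M := by omega
    have hq' : ∀ n, 1 ≤ n → n ≤ M → (1:ℂ) - q ^ n ≠ 0 := fun n h1 h2 => hq n h1 (by omega)
    have hb' : ∀ n, 1 ≤ n → n ≤ M → (1:ℂ) - b * q ^ n ≠ 0 := fun n h1 h2 => hb n h1 (by omega)
    have hPm : qP q q m ≠ 0 := qPq_ne_zero hq (by omega)
    have hPm1 : qP q q (m+1) ≠ 0 := qPq_ne_zero hq (by omega)
    have hq1 : ∀ n, 1 ≤ n → n ≤ m+1 → (1:ℂ) - q ^ n ≠ 0 := fun n h1 h2 => hq n h1 (by omega)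
    have step : ∑ i ∈ Finset.range (m+1+1),
        qBinom q (m+1) i * (-1)^i * q^(i.choose 2) * (qP (a*q) q (M+1-i) / qP (b*q) q (M+1-i))
      = (∑ i ∈ Finset.range (m+1),
          qBinom q m i * (-1)^i * q^(i.choose 2) * (qP (a*q) q (M+1-i) / qP (b*q) q (M+1-i)))
        - q^m * ∑ i ∈ Finset.range (m+1),
          qBinom q m i * (-1)^i * q^(i.choose 2) * (qP (a*q) q (M-i) / qP (b*q) q (M-i)) := by
      rw [Finset.sum_range_succ, Finset.sum_range_succ']
      have hsplit : ∀ i ∈ Finset.range m,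
          qBinom q (m+1) (i+1) * (-1)^(i+1) * q^((i+1).choose 2) *
              (qP (a*q) q (M+1-(i+1)) / qP (b*q) q (M+1-(i+1)))
          = qBinom q m (i+1) * (-1)^(i+1) * q^((i+1).choose 2) *
              (qP (a*q) q (M+1-(i+1)) / qP (b*q) q (M+1-(i+1)))
            + (- (q^m * (qBinom q m i * (-1)^i * q^(i.choose 2) *
                (qP (a*q) q (M-i) / qP (b*q) q (M-i))))) := by
        intro i hi
        have hi' : i < m := Finset.mem_range.mp hi
        rw [qBinom_pascal q m (i+1) (by omega) (by omega) hq1]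
        have e1 : M + 1 - (i+1) = M - i := by omega
        have e2 : (i+1) - 1 = i := by omega
        have e4 : q ^ (m+1-(i+1)) * q ^ ((i+1).choose 2) = q^m * q^(i.choose 2) := by
          rw [choose_two_succ, ← pow_add, ← pow_add]; congr 1; omega
        rw [e1, e2]
        have e5 : (-1:ℂ)^(i+1) = -(-1)^i := by rw [pow_succ]; ring
        rw [e5]
        calc (qBinom q m (i+1) + q ^ (m + 1 - (i + 1)) * qBinom q m i) * (-(-1:ℂ)^i) *
                q ^ ((i+1).choose 2) * (qP (a*q) q (M-i) / qP (b*q) q (M-i))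
            = qBinom q m (i+1) * (-(-1:ℂ)^i) * q ^ ((i+1).choose 2) *
                (qP (a*q) q (M-i) / qP (b*q) q (M-i))
              + (q ^ (m+1-(i+1)) * q ^ ((i+1).choose 2)) * qBinom q m i * (-(-1:ℂ)^i) *
                (qP (a*q) q (M-i) / qP (b*q) q (M-i)) := by ring
          _ = _ := by rw [e4]; ring
      rw [Finset.sum_congr rfl hsplit, Finset.sum_add_distrib]
      have hV : ∑ i ∈ Finset.range m,
          (- (q^m * (qBinom q m i * (-1)^i * q^(i.choose 2) *
              (qP (a*q) q (M-i) / qP (b*q) q (M-i)))))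
          = -(q^m * ∑ i ∈ Finset.range m,
              qBinom q m i * (-1)^i * q^(i.choose 2) *
                (qP (a*q) q (M-i) / qP (b*q) q (M-i))) := by
        rw [Finset.sum_neg_distrib, Finset.mul_sum]
      have hT0 : qBinom q (m+1) 0 * (-1:ℂ)^0 * q^(Nat.choose 0 2) *
            (qP (a*q) q (M+1-0) / qP (b*q) q (M+1-0))
          = qBinom q m 0 * (-1:ℂ)^0 * q^(Nat.choose 0 2) *
            (qP (a*q) q (M+1-0) / qP (b*q) q (M+1-0)) := by
        rw [qBinom_zero_right q (m+1) hPm1, qBinom_zero_right q m hPm]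
      have hTl : qBinom q (m+1) (m+1) * (-1:ℂ)^(m+1) * q^((m+1).choose 2) *
            (qP (a*q) q (M+1-(m+1)) / qP (b*q) q (M+1-(m+1)))
          = -(q^m * (qBinom q m m * (-1:ℂ)^m * q^(m.choose 2) *
            (qP (a*q) q (M-m) / qP (b*q) q (M-m)))) := by
        rw [qBinom_self q (m+1) hPm1, qBinom_self q m hPm]
        have e1 : M + 1 - (m+1) = M - m := by omega
        have e4 : q ^ ((m+1).choose 2) = q^m * q^(m.choose 2) := by
          rw [choose_two_succ, ← pow_add]; congr 1; omega
        rw [e1, e4, pow_succ]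
        ring
      rw [hV, hT0, hTl, Finset.sum_range_succ'
        (fun i => qBinom q m i * (-1:ℂ)^i * q^(i.choose 2) *
          (qP (a*q) q (M+1-i) / qP (b*q) q (M+1-i))) m,
        Finset.sum_range_succ
        (fun i => qBinom q m i * (-1:ℂ)^i * q^(i.choose 2) *
          (qP (a*q) q (M-i) / qP (b*q) q (M-i))) m]
      ring
    rw [step, ih (M+1) (by omega) hq hb, ih M hmM hq' hb']
    -- final algebra
    have hD : qP (b*q) q M ≠ 0 := qPb_ne_zero hb' (le_refl M)
    have hβ : (1:ℂ) - b * q * q ^ M ≠ 0 := by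
      rw [show b * q * q ^ M = b * q ^ (M+1) by rw [pow_succ]; ring]
      exact hb (M+1) (by omega) (le_refl _)
    have f2 : qP (b*q) q (M+1) = qP (b*q) q M * (1 - b*q*q^M) := qP_succ _ _ _
    have f1 : qP (a*q) q (M+1-m) = qP (a*q) q (M-m) * (1 - a*q*q^(M-m)) := by
      rw [show M+1-m = (M-m)+1 by omega]; exact qP_succ _ _ _
    have f3 : q^m * (∏ i ∈ Finset.range m, (b*q^M - a*q^(M-i)))
        = ∏ i ∈ Finset.range m, (b*q^(M+1) - a*q^(M+1-i)) := by
      have hc : ∀ i ∈ Finset.range m, b*q^(M+1) - a*q^(M+1-i) = q * (b*q^M - a*q^(M-i)) := by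
        intro i hi
        have hi' : i < m := Finset.mem_range.mp hi
        rw [show M+1-i = (M-i)+1 by omega, pow_succ, pow_succ]; ring
      rw [Finset.prod_congr rfl hc, Finset.prod_mul_distrib, Finset.prod_const,
        Finset.card_range]
    rw [show M+1-(m+1) = M-m by omega, Finset.prod_range_succ, f1, f2, ← f3,
      show M+1-m = (M-m)+1 by omega, pow_succ q (M-m), pow_succ q M]
    have hβ' : (1:ℂ) - q * b * q ^ M ≠ 0 := by rwa [mul_comm q b]
    field_simp
    ring

/-- coefficients of the LHS polynomial -/
noncomputable def cc (q a b : ℂ) (N n : ℕ) : ℂ :=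
  qBinom q N n * qP (a*q) q n * qP q q n / qP (b*q) q n

/-- coefficients of the RHS polynomial -/
noncomputable def ee (q a b : ℂ) (N n : ℕ) : ℂ :=
  qBinom q N n * qP (b/a) q n * qP (a*q) q (N-n) * (a*q)^n / qP (b*q) q N

noncomputable def Pp (q a b : ℂ) (N : ℕ) : Polynomial ℂ :=
  ∑ n ∈ Finset.range (N+1),
    Polynomial.C (cc q a b N n) * ∏ k ∈ Finset.range (N-n), (Polynomial.X - Polynomial.C (q^k))

noncomputable def Qq (q a b : ℂ) (N : ℕ) : Polynomial ℂ :=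
  ∑ n ∈ Finset.range (N+1),
    Polynomial.C (ee q a b N n) *
      ∏ k ∈ (Finset.range (N+1)).erase n, (Polynomial.X - Polynomial.C (q^k))

lemma prodA (q : ℂ) (i m : ℕ) (him : i ≤ m) :
    (∏ k ∈ Finset.range i, (q^m - q^k)) * qP q q (m-i)
      = (-1)^i * q^(i.choose 2) * qP q q m := by
  have h1 : qP q q m = qP q q (m-i) * ∏ k ∈ Finset.range i, (1 - q * q ^ ((m-i) + k)) := by
    rw [← qP_add]; congr 1; omega
  have h2 : ∏ k ∈ Finset.range i, (q^m - q^k)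
      = (-1)^i * q^(i.choose 2) * ∏ k ∈ Finset.range i, (1 - q * q ^ ((m-i) + k)) := by
    rw [← Finset.prod_range_reflect (fun k => q^m - q^k) i]
    have hc : ∀ k ∈ Finset.range i,
        q^m - q^(i-1-k) = (-1) * q^(i-1-k) * (1 - q * q^((m-i)+k)) := by
      intro k hk
      have hk' : k < i := Finset.mem_range.mp hk
      have hx : q^(i-1-k) * (q * q^((m-i)+k)) = q^m := by
        rw [← pow_succ', ← pow_add]; congr 1; omega
      rw [← hx]; ring
    rw [Finset.prod_congr rfl hc, Finset.prod_mul_distrib, Finset.prod_mul_distrib,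
      Finset.prod_const, Finset.card_range,
      Finset.prod_range_reflect (fun k => q^k) i, Finset.prod_pow_eq_pow_sum,
      Finset.sum_range_id, ← Nat.choose_two_right]
  rw [h2, h1]; ring

lemma prodB (q a b : ℂ) (m N : ℕ) (hm : m ≤ N) (ha : a ≠ 0) :
    (-1)^m * q^(m.choose 2) * q^(m*(N-m)) * (a*q)^m * qP (b/a) q m
      = ∏ i ∈ Finset.range m, (b*q^N - a*q^(N-i)) := by
  have hc : ∀ i ∈ Finset.range m,
      b*q^N - a*q^(N-i) = (-1) * q^(m-1-i) * q^(N-m) * (a*q) * (1 - (b/a) * q^i) := by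
    intro i hi
    have hi' : i < m := Finset.mem_range.mp hi
    have hz : q ^ N = q^(1 + (m-1-i) + (N-m) + i) := by congr 1; omega
    have hw : q ^ (N-i) = q^(1 + (m-1-i) + (N-m)) := by congr 1; omega
    field_simp
    rw [hz, hw, pow_add, pow_add, pow_add, pow_one]
    ring
  rw [Finset.prod_congr rfl hc, Finset.prod_mul_distrib, Finset.prod_mul_distrib,
    Finset.prod_mul_distrib, Finset.prod_mul_distrib, Finset.prod_const,
    Finset.prod_const, Finset.prod_const, Finset.card_range,
    Finset.prod_range_reflect (fun k => q^k) m,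
    Finset.prod_pow_eq_pow_sum, Finset.sum_range_id, ← Nat.choose_two_right,
    ← pow_mul, show (N-m)*m = m*(N-m) from Nat.mul_comm _ _, qP]

lemma evalP (q a b : ℂ) (N m : ℕ) (hm : m ≤ N)
    (hq : ∀ n, 1 ≤ n → n ≤ N → (1:ℂ) - q ^ n ≠ 0)
    (hb : ∀ n, 1 ≤ n → n ≤ N → (1:ℂ) - b * q ^ n ≠ 0) :
    Polynomial.eval (q^m) (Pp q a b N)
      = qP q q N * (qP (a*q) q (N-m) *
          (∏ i ∈ Finset.range m, (b*q^N - a*q^(N-i))) / qP (b*q) q N) := by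
  have hev : Polynomial.eval (q^m) (Pp q a b N)
      = ∑ n ∈ Finset.range (N+1), cc q a b N n * ∏ k ∈ Finset.range (N-n), (q^m - q^k) := by
    simp [Pp, Polynomial.eval_finset_sum, Polynomial.eval_prod]
  rw [hev, ← Finset.sum_range_reflect
    (fun n => cc q a b N n * ∏ k ∈ Finset.range (N-n), (q^m - q^k)) (N+1)]
  simp only [Nat.add_sub_cancel]
  have hsub : Finset.range (m+1) ⊆ Finset.range (N+1) :=
    Finset.range_subset_range.mpr (by omega)
  have hvan : ∀ x ∈ Finset.range (N+1), x ∉ Finset.range (m+1) →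
      cc q a b N (N-x) * ∏ k ∈ Finset.range (N-(N-x)), (q^m - q^k) = 0 := by
    intro x hx hx'
    have h1 : x ≤ N := by have := Finset.mem_range.mp hx; omega
    have h2 : m < x := by
      by_contra h; exact hx' (Finset.mem_range.mpr (by omega))
    have : ∏ k ∈ Finset.range (N-(N-x)), (q^m - q^k) = 0 := by
      refine Finset.prod_eq_zero (Finset.mem_range.mpr (show m < N-(N-x) by omega)) ?_
      rw [sub_self]
    rw [this, mul_zero]
  rw [← Finset.sum_subset hsub hvan]
  have hcongr : ∀ i ∈ Finset.range (m+1),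
      cc q a b N (N-i) * ∏ k ∈ Finset.range (N-(N-i)), (q^m - q^k)
      = qP q q N * (qBinom q m i * (-1)^i * q^(i.choose 2) *
          (qP (a*q) q (N-i) / qP (b*q) q (N-i))) := by
    intro i hi
    have hi' : i ≤ m := by have := Finset.mem_range.mp hi; omega
    have e0 : N - (N-i) = i := by omega
    have hPmi : qP q q (m-i) ≠ 0 := qPq_ne_zero hq (by omega)
    have hPi : qP q q i ≠ 0 := qPq_ne_zero hq (by omega)
    have hPm : qP q q m ≠ 0 := qPq_ne_zero hq (by omega)
    have hPNi : qP q q (N-i) ≠ 0 := qPq_ne_zero hq (by omega)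
    have hPbNi : qP (b*q) q (N-i) ≠ 0 := qPb_ne_zero hb (by omega)
    have hA : ∏ k ∈ Finset.range i, (q^m - q^k)
        = (-1)^i * q^(i.choose 2) * qP q q m / qP q q (m-i) := by
      rw [eq_div_iff hPmi]; exact prodA q i m hi'
    rw [e0, cc, qBinom, qBinom, hA, e0]
    field_simp
  rw [Finset.sum_congr rfl hcongr, ← Finset.mul_sum, keyK a b q m N hm hq hb]

lemma evalQ (q a b : ℂ) (N m : ℕ) (hm : m ≤ N) (ha : a ≠ 0)
    (hq : ∀ n, 1 ≤ n → n ≤ N → (1:ℂ) - q ^ n ≠ 0)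
    (hb : ∀ n, 1 ≤ n → n ≤ N → (1:ℂ) - b * q ^ n ≠ 0) :
    Polynomial.eval (q^m) (Qq q a b N)
      = qP q q N * (qP (a*q) q (N-m) *
          (∏ i ∈ Finset.range m, (b*q^N - a*q^(N-i))) / qP (b*q) q N) := by
  have hev : Polynomial.eval (q^m) (Qq q a b N)
      = ∑ n ∈ Finset.range (N+1),
          ee q a b N n * ∏ k ∈ (Finset.range (N+1)).erase n, (q^m - q^k) := by
    simp [Qq, Polynomial.eval_finset_sum, Polynomial.eval_prod]
  rw [hev, Finset.sum_eq_single m]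
  · -- main term
    have hdisj : Disjoint (Finset.range m) (Finset.Ico (m+1) (N+1)) := by
      refine Finset.disjoint_left.mpr (fun x hx hx' => ?_)
      have := Finset.mem_range.mp hx
      have := Finset.mem_Ico.mp hx'
      omega
    have hsplit : (Finset.range (N+1)).erase m
        = Finset.range m ∪ Finset.Ico (m+1) (N+1) := by
      ext x
      simp only [Finset.mem_erase, Finset.mem_range, Finset.mem_union, Finset.mem_Ico]
      omega
    have h1 : ∏ k ∈ Finset.range m, (q^m - q^k) = (-1)^m * q^(m.choose 2) * qP q q m := by
      have := prodA q m m le_rfl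
      rwa [Nat.sub_self, qP_zero, mul_one] at this
    have h2 : ∏ k ∈ Finset.Ico (m+1) (N+1), (q^m - q^k)
        = q^(m*(N-m)) * qP q q (N-m) := by
      rw [Finset.prod_Ico_eq_prod_range, show N+1-(m+1) = N-m by omega]
      have hc : ∀ j ∈ Finset.range (N-m), q^m - q^(m+1+j) = q^m * (1 - q * q^j) := by
        intro j hj
        rw [show m+1+j = m+(1+j) by omega, pow_add, pow_add, pow_one]
        ring
      rw [Finset.prod_congr rfl hc, Finset.prod_mul_distrib, Finset.prod_const,
        Finset.card_range, ← pow_mul, qP]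
    rw [hsplit, Finset.prod_union hdisj, h1, h2]
    have hPm : qP q q m ≠ 0 := qPq_ne_zero hq (by omega)
    have hPNm : qP q q (N-m) ≠ 0 := qPq_ne_zero hq (by omega)
    have hPbN : qP (b*q) q N ≠ 0 := qPb_ne_zero hb le_rfl
    rw [ee, qBinom, ← prodB q a b m N hm ha]
    field_simp
  · intro n hn hnm
    have : ∏ k ∈ (Finset.range (N+1)).erase n, (q^m - q^k) = 0 := by
      refine Finset.prod_eq_zero (Finset.mem_erase.mpr ⟨Ne.symm hnm,
        Finset.mem_range.mpr (by omega)⟩) ?_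
      rw [sub_self]
    rw [this, mul_zero]
  · intro h
    exact absurd (Finset.mem_range.mpr (by omega)) h


lemma degPp_lt (q a b : ℂ) (N : ℕ) :
    (Pp q a b N).degree < ((Finset.range (N+1)).card : ℕ) := by
  rw [Finset.card_range]
  refine lt_of_le_of_lt (Polynomial.degree_sum_le _ _) ?_
  rw [Finset.sup_lt_iff (by exact_mod_cast WithBot.bot_lt_coe (N+1))]
  intro n hn
  refine lt_of_le_of_lt (Polynomial.degree_mul_le _ _) ?_
  have h2 : (∏ k ∈ Finset.range (N-n), (Polynomial.X - Polynomial.C (q^k))).degree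
      = ((N - n : ℕ) : WithBot ℕ) := by
    rw [Polynomial.degree_prod, Finset.sum_congr rfl
      (fun k _ => Polynomial.degree_X_sub_C (q^k))]
    simp
  calc (Polynomial.C (cc q a b N n)).degree
        + (∏ k ∈ Finset.range (N-n), (Polynomial.X - Polynomial.C (q^k))).degree
      ≤ 0 + ((N - n : ℕ) : WithBot ℕ) := add_le_add Polynomial.degree_C_le (le_of_eq h2)
    _ = ((N - n : ℕ) : WithBot ℕ) := by rw [zero_add]
    _ < ((N + 1 : ℕ) : WithBot ℕ) := by exact_mod_cast (by omega : N - n < N + 1)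

lemma degQq_lt (q a b : ℂ) (N : ℕ) :
    (Qq q a b N).degree < ((Finset.range (N+1)).card : ℕ) := by
  rw [Finset.card_range]
  refine lt_of_le_of_lt (Polynomial.degree_sum_le _ _) ?_
  rw [Finset.sup_lt_iff (by exact_mod_cast WithBot.bot_lt_coe (N+1))]
  intro n hn
  refine lt_of_le_of_lt (Polynomial.degree_mul_le _ _) ?_
  have h2 : (∏ k ∈ (Finset.range (N+1)).erase n, (Polynomial.X - Polynomial.C (q^k))).degree
      = ((((Finset.range (N+1)).erase n).card : ℕ) : WithBot ℕ) := by
    rw [Polynomial.degree_prod, Finset.sum_congr rfl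
      (fun k _ => Polynomial.degree_X_sub_C (q^k))]
    simp
  have h3 : ((Finset.range (N+1)).erase n).card = N := by
    rw [Finset.card_erase_of_mem hn, Finset.card_range]
    omega
  calc (Polynomial.C (ee q a b N n)).degree
        + (∏ k ∈ (Finset.range (N+1)).erase n, (Polynomial.X - Polynomial.C (q^k))).degree
      ≤ 0 + ((N : ℕ) : WithBot ℕ) := add_le_add Polynomial.degree_C_le (by rw [h2, h3])
    _ = ((N : ℕ) : WithBot ℕ) := by rw [zero_add]
    _ < ((N + 1 : ℕ) : WithBot ℕ) := by exact_mod_cast (by omega : N < N + 1)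

lemma nodes_inj {q : ℂ} {N : ℕ} (hq0 : q ≠ 0)
    (hq : ∀ n, 1 ≤ n → n ≤ N → (1:ℂ) - q ^ n ≠ 0) :
    Set.InjOn (fun m : ℕ => q^m) (Finset.range (N+1)) := by
  have key : ∀ i j : ℕ, i < j → j ≤ N → q^i ≠ q^j := by
    intro i j hij hj e
    have h0 : q^i * (1 - q^(j-i)) = 0 := by
      rw [mul_sub, mul_one, ← pow_add, show i + (j-i) = j by omega, e, sub_self]
    rcases mul_eq_zero.mp h0 with h | h
    · exact pow_ne_zero _ hq0 h
    · exact hq (j-i) (by omega) (by omega) h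
  intro i hi j hj e
  simp only [Finset.coe_range, Set.mem_Iio] at hi hj
  rcases lt_trichotomy i j with h | h | h
  · exact absurd e (key i j h (by omega))
  · exact h
  · exact absurd e.symm (key j i h (by omega))

lemma PpQq (q a b : ℂ) (N : ℕ) (ha : a ≠ 0) (hq0 : q ≠ 0)
    (hq : ∀ n, 1 ≤ n → n ≤ N → (1:ℂ) - q ^ n ≠ 0)
    (hb : ∀ n, 1 ≤ n → n ≤ N → (1:ℂ) - b * q ^ n ≠ 0) :
    Pp q a b N = Qq q a b N := by
  refine Polynomial.eq_of_degrees_lt_of_eval_index_eq (v := fun m : ℕ => q^m)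
    (Finset.range (N+1)) (nodes_inj hq0 hq) (degPp_lt q a b N) (degQq_lt q a b N) ?_
  intro m hm
  have hm' : m ≤ N := by have := Finset.mem_range.mp hm; omega
  rw [evalP q a b N m hm' hq hb, evalQ q a b N m hm' ha hq hb]

noncomputable def Pt (q a b : ℂ) (N : ℕ) : Polynomial ℂ :=
  ∑ n ∈ Finset.range (N+1), Polynomial.C (cc q a b N n) * Polynomial.X^n *
    ∏ k ∈ Finset.range (N-n), (1 - Polynomial.C (q^k) * Polynomial.X)

noncomputable def Qt (q a b : ℂ) (N : ℕ) : Polynomial ℂ :=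
  ∑ n ∈ Finset.range (N+1), Polynomial.C (ee q a b N n) *
    ∏ k ∈ (Finset.range (N+1)).erase n, (1 - Polynomial.C (q^k) * Polynomial.X)

lemma bridgeP (q a b s : ℂ) (N : ℕ) (hs : s ≠ 0) :
    Polynomial.eval s (Pt q a b N) = s^N * Polynomial.eval s⁻¹ (Pp q a b N) := by
  simp only [Pt, Pp, Polynomial.eval_finset_sum, Polynomial.eval_mul, Polynomial.eval_pow,
    Polynomial.eval_C, Polynomial.eval_X, Polynomial.eval_prod, Polynomial.eval_sub,
    Polynomial.eval_one, Finset.mul_sum]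
  refine Finset.sum_congr rfl (fun n hn => ?_)
  have hn' : n ≤ N := by have := Finset.mem_range.mp hn; omega
  have hprod : ∀ k ∈ Finset.range (N-n), (1 : ℂ) - q^k * s = s * (s⁻¹ - q^k) := by
    intro k _; field_simp
  rw [Finset.prod_congr rfl hprod, Finset.prod_mul_distrib, Finset.prod_const,
    Finset.card_range]
  have hS : s^n * s^(N-n) = s^N := by rw [← pow_add]; congr 1; omega
  rw [← hS]; ring

lemma bridgeQ (q a b s : ℂ) (N : ℕ) (hs : s ≠ 0) :
    Polynomial.eval s (Qt q a b N) = s^N * Polynomial.eval s⁻¹ (Qq q a b N) := by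
  simp only [Qt, Qq, Polynomial.eval_finset_sum, Polynomial.eval_mul, Polynomial.eval_pow,
    Polynomial.eval_C, Polynomial.eval_X, Polynomial.eval_prod, Polynomial.eval_sub,
    Polynomial.eval_one, Finset.mul_sum]
  refine Finset.sum_congr rfl (fun n hn => ?_)
  have hprod : ∀ k ∈ (Finset.range (N+1)).erase n, (1 : ℂ) - q^k * s = s * (s⁻¹ - q^k) := by
    intro k _; field_simp
  rw [Finset.prod_congr rfl hprod, Finset.prod_mul_distrib, Finset.prod_const,
    Finset.card_erase_of_mem hn, Finset.card_range, Nat.add_sub_cancel]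
  ring

lemma PtQt (q a b : ℂ) (N : ℕ) (ha : a ≠ 0) (hq0 : q ≠ 0)
    (hq : ∀ n, 1 ≤ n → n ≤ N → (1:ℂ) - q ^ n ≠ 0)
    (hb : ∀ n, 1 ≤ n → n ≤ N → (1:ℂ) - b * q ^ n ≠ 0) :
    Pt q a b N = Qt q a b N := by
  apply Polynomial.eq_of_infinite_eval_eq
  refine Set.Infinite.mono ?_ ((Set.finite_singleton (0:ℂ)).infinite_compl)
  intro x hx
  have hx0 : x ≠ 0 := hx
  simp only [Set.mem_setOf_eq]
  rw [bridgeP q a b x N hx0, bridgeQ q a b x N hx0, PpQq q a b N ha hq0 hq hb]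


lemma qP_zero_left (q : ℂ) (n : ℕ) : qP 0 q n = 1 := by simp [qP]

lemma qP_base0 (x : ℂ) : ∀ n, qP x 0 (n+1) = 1 - x := by
  intro n
  induction n with
  | zero => simp [qP]
  | succ m ih => rw [qP_succ, ih, zero_pow (by omega : m+1 ≠ 0)]; ring

lemma qBinom_q0 (N n : ℕ) : qBinom 0 N n = 1 := by
  simp [qBinom, qP_zero_left]

/-- Partial fraction decomposition of the finite Fine function. -/
theorem stmt_16 (N : ℕ) (hN : 1 ≤ N) (q a b t : ℂ) (ha : a ≠ 0)
    (hq : ∀ n, 1 ≤ n → n ≤ N → (1 : ℂ) - q ^ n ≠ 0)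
    (ht : ∀ n, n ≤ N → 1 - t * q ^ n ≠ 0)
    (hb : ∀ n, 1 ≤ n → n ≤ N → 1 - b * q ^ n ≠ 0)
    (haN : qP (a * q) q N ≠ 0) :
    fineN q N a b t =
      ((1 - t * q ^ N) * qP (a * q) q N / qP (b * q) q N) *
        ∑ n ∈ Finset.range (N + 1),
          qBinom q N n * (qP (b / a) q n * qP (a * q) q (N - n) * (a * q) ^ n /
            (qP (a * q) q N * (1 - t * q ^ n))) := by
  rcases eq_or_ne q 0 with rfl | hq0
  · -- the degenerate case q = 0
    have h1t : (1:ℂ) - t ≠ 0 := by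
      have := ht 0 (by omega); simpa using this
    have hqPtN : qP t 0 N = 1 - t := by
      rw [show N = (N-1)+1 by omega, qP_base0]
    have hfine : fineN 0 N a b t = (∑ n ∈ Finset.range N, t^n) + t^N / (1-t) := by
      rw [fineN]
      rw [Finset.sum_range_succ, Nat.sub_self, qP_zero]
      congr 1
      · refine Finset.sum_congr rfl fun n hn => ?_
        have hn' : n < N := Finset.mem_range.mp hn
        rw [show N - n = (N-n-1)+1 by omega]
        simp only [mul_zero, qBinom_q0, qP_zero_left, hqPtN, qP_base0, one_mul, mul_one]
        rw [mul_comm, mul_div_assoc, div_self h1t, mul_one]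
      · simp only [mul_zero, qBinom_q0, qP_zero_left, hqPtN, one_mul, mul_one]
    rw [hfine]
    have hpref : (1 - t * (0:ℂ) ^ N) * qP (a * 0) 0 N / qP (b * 0) 0 N = 1 := by
      simp only [mul_zero, qP_zero_left, zero_pow (show N ≠ 0 by omega)]
      norm_num
    rw [hpref, one_mul]
    have hsum : (∑ n ∈ Finset.range (N + 1),
        qBinom 0 N n * (qP (b / a) 0 n * qP (a * 0) 0 (N - n) * (a * 0) ^ n /
          (qP (a * 0) 0 N * (1 - t * 0 ^ n)))) = 1/(1-t) := by
      rw [Finset.sum_eq_single 0]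
      · simp only [mul_zero, qBinom_q0, qP_zero, qP_zero_left, pow_zero]
        norm_num
      · intro n hn hn0
        simp [mul_zero, zero_pow hn0]
      · intro h
        exact absurd (Finset.mem_range.mpr (by omega)) h
    rw [hsum]
    have hg : (∑ i ∈ Finset.range N, t^i) * (t-1) = t^N - 1 := geom_sum_mul t N
    rw [eq_div_iff h1t, add_mul, div_mul_cancel₀ _ h1t]
    linear_combination -hg
  · have htN : qP t q N ≠ 0 := qP_ne_zero _ _ _ (fun k hk => ht k (by omega))
    have hLHS : fineN q N a b t = Polynomial.eval t (Pt q a b N) / qP t q N := by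
      have hev : Polynomial.eval t (Pt q a b N)
          = ∑ n ∈ Finset.range (N+1), cc q a b N n * t^n * qP t q (N-n) := by
        simp only [Pt, Polynomial.eval_finset_sum, Polynomial.eval_mul, Polynomial.eval_pow,
          Polynomial.eval_C, Polynomial.eval_X, Polynomial.eval_prod, Polynomial.eval_sub,
          Polynomial.eval_one]
        refine Finset.sum_congr rfl fun n _ => ?_
        congr 1
        rw [qP]
        exact Finset.prod_congr rfl (fun k _ => by ring)
      rw [fineN, hev, Finset.sum_div]
      refine Finset.sum_congr rfl fun n hn => ?_
      have hn' : n ≤ N := by have := Finset.mem_range.mp hn; omega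
      have hbn : qP (b*q) q n ≠ 0 := qPb_ne_zero hb hn'
      rw [cc]
      field_simp
    have hRHS : ((1 - t * q ^ N) * qP (a * q) q N / qP (b * q) q N) *
        (∑ n ∈ Finset.range (N + 1),
          qBinom q N n * (qP (b / a) q n * qP (a * q) q (N - n) * (a * q) ^ n /
            (qP (a * q) q N * (1 - t * q ^ n))))
        = Polynomial.eval t (Qt q a b N) / qP t q N := by
      have hev : Polynomial.eval t (Qt q a b N)
          = ∑ n ∈ Finset.range (N+1),
              ee q a b N n * ∏ k ∈ (Finset.range (N+1)).erase n, (1 - t * q^k) := by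
        simp only [Qt, Polynomial.eval_finset_sum, Polynomial.eval_mul, Polynomial.eval_pow,
          Polynomial.eval_C, Polynomial.eval_X, Polynomial.eval_prod, Polynomial.eval_sub,
          Polynomial.eval_one]
        refine Finset.sum_congr rfl fun n _ => ?_
        congr 1
        exact Finset.prod_congr rfl (fun k _ => by ring)
      rw [hev, Finset.mul_sum, Finset.sum_div]
      refine Finset.sum_congr rfl fun n hn => ?_
      have hn' : n ≤ N := by have := Finset.mem_range.mp hn; omega
      have htn : (1:ℂ) - t * q^n ≠ 0 := ht n hn'
      have hbN : qP (b*q) q N ≠ 0 := qPb_ne_zero hb le_rfl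
      have hE : ∏ k ∈ (Finset.range (N+1)).erase n, (1 - t * q^k)
          = qP t q N * (1 - t*q^N) / (1 - t*q^n) := by
        rw [eq_div_iff htn, mul_comm]
        exact (Finset.mul_prod_erase (Finset.range (N+1)) (fun k => 1 - t*q^k) hn).trans
          (by rw [Finset.prod_range_succ, qP])
      rw [hE, ee]
      field_simp
    rw [hLHS, hRHS, PtQt q a b N ha hq0 hq hb]
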